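/- Let T be a finite tree with positive edge weights and tree metric d, let m > 0, and let a, b, a', b' be leaves with a ≠ b and a' ≠ b' such that d(a,b) ≤ m, d(a',b') ≤ m, and d(u,v) ≥ m for every u ∈ {a,b} and v ∈ {a',b'}. Then the edge sets of the paths Path(a,b) and Path(a',b') in T are disjoint. -/

import Mathlib

open scoped Classical
open Real

noncomputable section

namespace RAS

variable {V : Type}

/-- The canonical path (as a walk) between two vertices of a tree. -/
def tpath (G : SimpleGraph V) [DecidableEq V] (hG : G.IsTree) (u v : V) : G.Walk u v :=
  ((Classical.choice (hG.isConnected.preconnected u v)).toPath : G.Path u v).1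

/-- Tree metric: sum of edge weights along the path. -/
def tdist (G : SimpleGraph V) [DecidableEq V] (hG : G.IsTree) (w : Sym2 V → ℝ) (u v : V) : ℝ :=
  ((tpath G hG u v).edges.map w).sum

/-- Edges of the canonical path. -/
def pathEdges (G : SimpleGraph V) [DecidableEq V] (hG : G.IsTree) (u v : V) :
    List (Sym2 V) :=
  (tpath G hG u v).edges

/-- A leaf is a vertex of degree 1. -/
def IsLeaf (G : SimpleGraph V) (v : V) : Prop := (G.neighborSet v).ncard = 1

/-- A symmetric edge factor depending on whether the endpoint states agree. -/
def agreeIf {α : Type} (σ : V → α) (A B : ℝ) : Sym2 V → ℝ :=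
  Sym2.lift ⟨fun u v => if σ u = σ v then A else B, fun u v => by
    simp only []
    by_cases h : σ u = σ v
    · rw [if_pos h, if_pos h.symm]
    · rw [if_neg h, if_neg (fun hh => h hh.symm)]⟩

/-- Probability mass function of the `r`-state Poisson model on a weighted tree. -/
def poissonPMF (G : SimpleGraph V) [Fintype V] [DecidableEq V]
    (w : Sym2 V → ℝ) (r : ℕ) (σ : V → Fin r) : ℝ :=
  (r : ℝ)⁻¹ * ∏ e ∈ (Set.toFinite G.edgeSet).toFinset,
      agreeIf σ ((r : ℝ)⁻¹ + (1 - (r : ℝ)⁻¹) * exp (-(w e)))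
        ((r : ℝ)⁻¹ * (1 - exp (-(w e)))) e

/-- Probability of an event under a pmf on a finite configuration space. -/
def fprob {Ω : Type} [Fintype Ω] (p : Ω → ℝ) (A : Set Ω) : ℝ :=
  ∑ ω : Ω, if ω ∈ A then p ω else 0

variable (G : SimpleGraph V) [DecidableEq V] (hG : G.IsTree) (w : Sym2 V → ℝ)

lemma tpath_isPath (u v : V) : (tpath G hG u v).IsPath :=
  ((Classical.choice (hG.isConnected.preconnected u v)).toPath : G.Path u v).2

lemma tpath_eq {u v : V} (p : G.Walk u v) (hp : p.IsPath) : tpath G hG u v = p :=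
  ((hG.existsUnique_path u v).unique (tpath_isPath G hG u v) hp)

lemma tdist_eq {u v : V} (p : G.Walk u v) (hp : p.IsPath) :
    tdist G hG w u v = (p.edges.map w).sum := by
  rw [tdist, tpath_eq G hG p hp]

lemma sublist_sum_le {l₁ l₂ : List ℝ} (h : List.Sublist l₁ l₂) (h0 : ∀ x ∈ l₂, 0 ≤ x) :
    l₁.sum ≤ l₂.sum := by
  induction h with
  | slnil => simp
  | cons a h ih =>
      simp only [List.sum_cons]
      have := ih (fun x hx => h0 x (List.mem_cons_of_mem _ hx))
      have ha := h0 a List.mem_cons_self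
      linarith
  | cons_cons a h ih =>
      simp only [List.sum_cons]
      have := ih (fun x hx => h0 x (List.mem_cons_of_mem _ hx))
      linarith

lemma subperm_sum_le {l₁ l₂ : List ℝ} (h : List.Subperm l₁ l₂) (h0 : ∀ x ∈ l₂, 0 ≤ x) :
    l₁.sum ≤ l₂.sum := by
  obtain ⟨l, hp, hs⟩ := h
  rw [← hp.sum_eq]
  exact sublist_sum_le hs h0

variable (hw : ∀ e ∈ G.edgeSet, 0 ≤ w e)

include hw in
lemma tdist_triangle (u x v : V) :
    tdist G hG w u v ≤ tdist G hG w u x + tdist G hG w x v := by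
  set q : G.Walk u v := (tpath G hG u x).append (tpath G hG x v) with hq
  have hbp : tdist G hG w u v = (q.bypass.edges.map w).sum :=
    tdist_eq G hG w _ q.bypass_isPath
  have hsub : (q.bypass.edges.map w).sum ≤ (q.edges.map w).sum := by
    apply subperm_sum_le
    · obtain ⟨l, hp, hs⟩ := (q.bypass.edges_nodup_of_support_nodup
        q.bypass_isPath.support_nodup).subperm q.edges_bypass_subset
      exact ⟨l.map w, hp.map w, hs.map w⟩
    · intro x hx
      obtain ⟨e, he, rfl⟩ := List.mem_map.1 hx
      exact hw e (q.edges_subset_edgeSet he)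
  have : (q.edges.map w).sum = tdist G hG w u x + tdist G hG w x v := by
    rw [hq, SimpleGraph.Walk.edges_append, List.map_append, List.sum_append]; rfl
  linarith [hbp, hsub, this]

lemma tdist_symm (u v : V) : tdist G hG w u v = tdist G hG w v u := by
  rw [tdist_eq G hG w (tpath G hG u v).reverse ((tpath_isPath G hG u v).reverse),
    SimpleGraph.Walk.edges_reverse, List.map_reverse, List.sum_reverse]
  rfl

lemma edge_split {u v : V} {e : Sym2 V} (he : e ∈ (tpath G hG u v).edges) :
    ∃ x y, e = s(x, y) ∧
      tdist G hG w u x + w e + tdist G hG w y v = tdist G hG w u v := by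
  rw [tdist, ← tpath_eq G hG (tpath G hG u v) (tpath_isPath G hG u v)] at *
  generalize hp : tpath G hG u v = p at he
  have hip : p.IsPath := hp ▸ tpath_isPath G hG u v
  clear hp
  induction p with
  | nil => simp at he
  | @cons u c v h q ih =>
      rw [SimpleGraph.Walk.edges_cons, List.mem_cons] at he
      have hq : q.IsPath := hip.of_cons
      have hu : u ∉ q.support := (SimpleGraph.Walk.cons_isPath_iff _ _).1 hip |>.2
      rcases he with he | he
      · refine ⟨u, c, he, ?_⟩
        have h1 : tdist G hG w u u = 0 := by
          rw [tdist_eq G hG w SimpleGraph.Walk.nil (by simp)]; simp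
        have h2 : tdist G hG w c v = (q.edges.map w).sum := tdist_eq G hG w q hq
        simp [h1, h2, he]
      · obtain ⟨x, y, hexy, hsum⟩ := ih he hq
        refine ⟨x, y, hexy, ?_⟩
        have hxs : x ∈ q.support := by
          have := SimpleGraph.Walk.fst_mem_support_of_mem_edges q (hexy ▸ he)
          exact this
        have hpathux : (SimpleGraph.Walk.cons h (q.takeUntil x hxs)).IsPath :=
          (hq.takeUntil hxs).cons (fun hc => hu (q.support_takeUntil_subset hxs hc))
        have h1 : tdist G hG w u x = w s(u, c) + tdist G hG w c x := by
          rw [tdist_eq G hG w _ hpathux, tdist_eq G hG w _ (hq.takeUntil hxs)]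
          simp
        rw [SimpleGraph.Walk.edges_cons, List.map_cons, List.sum_cons, h1, ← hsum]
        ring

end RAS

/-- In a finite weighted tree, if `d(a,b) ≤ m`, `d(a',b') ≤ m`
and `d(u,v) ≥ m` for every `u ∈ {a,b}` and `v ∈ {a',b'}`, then the paths
between `a,b` and between `a',b'` are edge-disjoint. -/
theorem far_pairs_edge_disjoint
    {V : Type} [Fintype V] [DecidableEq V] (G : SimpleGraph V) (hG : G.IsTree)
    (w : Sym2 V → ℝ) (hw : ∀ e ∈ G.edgeSet, 0 < w e)
    (m : ℝ) (hm : 0 < m) (a b a' b' : V)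
    (hla : RAS.IsLeaf G a) (hlb : RAS.IsLeaf G b)
    (hla' : RAS.IsLeaf G a') (hlb' : RAS.IsLeaf G b')
    (hab : a ≠ b) (hab' : a' ≠ b')
    (hd1 : RAS.tdist G hG w a b ≤ m) (hd2 : RAS.tdist G hG w a' b' ≤ m)
    (hfar : ∀ u ∈ ({a, b} : Set V), ∀ v ∈ ({a', b'} : Set V),
      m ≤ RAS.tdist G hG w u v) :
    List.Disjoint (RAS.pathEdges G hG a b) (RAS.pathEdges G hG a' b') := by
  intro e he he'
  have hwn : ∀ e ∈ G.edgeSet, 0 ≤ w e := fun e h => (hw e h).le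
  obtain ⟨x, y, hexy, h1⟩ := RAS.edge_split G hG w he
  obtain ⟨x', y', hexy', h2⟩ := RAS.edge_split G hG w he'
  have hwpos : 0 < w e := hw e ((RAS.tpath G hG a b).edges_subset_edgeSet he)
  have hsym := RAS.tdist_symm G hG w
  have htri := RAS.tdist_triangle G hG w hwn
  have hxy : s(x, y) = s(x', y') := hexy ▸ hexy'
  rw [Sym2.eq_iff] at hxy
  rcases hxy with ⟨rfl, rfl⟩ | ⟨rfl, rfl⟩
  · have hfaa := hfar a (by simp) a' (by simp)
    have hfbb := hfar b (by simp) b' (by simp)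
    have t1 := htri a x a'
    have t2 := htri b y b'
    have s1 := hsym x a'
    have s2 := hsym b y
    linarith
  · have hfab := hfar a (by simp) b' (by simp)
    have hfba := hfar b (by simp) a' (by simp)
    have t1 := htri a x b'
    have t2 := htri b y a'
    have s1 := hsym b y
    have s2 := hsym y a'
    linarith
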